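/- Let Σ_A be a topologically mixing countable Markov shift, 0 < θ < 1, and let φ : Σ_A → ℝ be locally θ-Hölder, strongly positive recurrent, with P_G(φ) = 0. Fix a state a ∈ S, constants ε_a > 0 and p > 0 with θ e^{p} < 1, set ψ := φ + ε_a − p·1_{[a]} (where [a] = {x : x₀ = a}), and let c := exp(Σ_{k≥2} var_k(φ)). Suppose h₀ : Σ_A → (0,∞) is continuous, satisfies L_ψ h₀ = h₀ pointwise, has h₀[b] := sup_{x∈[b]} h₀(x) < ∞ for every state b, and satisfies h₀(x) ≥ c^{−1} h₀[x₀] for every x. For f : Σ_A → ℝ define ‖f‖_𝓑 := sup_{b∈S} (1/h₀[b]) [ sup_{x∈[b]} |f(x)| + sup_{x≠y∈[b]} |f(x) − f(y)|/θ^{s_a(x,y)} ], where s_a(x,y) = #{ 0 ≤ i ≤ t(x,y) − 1 : x_i = y_i = a } and t(x,y) = min{k : x_k ≠ y_k}. Then for every ε > 0 there exists δ > 0 such that for every locally θ-Hölder strongly positive recurrent potential τ with P_G(τ) = 0 and ‖φ − τ‖_θ < δ, one has ‖L_φ f − L_τ f‖_𝓑 ≤ ε for every f with ‖f‖_𝓑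 ≤ 1; that is, the operator norm ‖L_φ − L_τ‖ on (𝓑, ‖·‖_𝓑) is at most ε. -/

import Mathlib

open MeasureTheory Filter Topology
open scoped ENNReal NNReal

variable {S : Type} [Countable S] [TopologicalSpace S] [DiscreteTopology S]

/-- The countable Markov shift with alphabet `S` and transition matrix `A`. -/
abbrev CMS (A : S → S → Prop) : Type := {x : ℕ → S // ∀ i, A (x i) (x (i + 1))}

variable (A : S → S → Prop)

/-- The left shift map on the countable Markov shift. -/
def shiftA : CMS A → CMS A := fun x => ⟨fun n => x.1 (n + 1), fun i => x.2 (i + 1)⟩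

/-- Topological mixing: for all states `a, b` there is `N` such that for every `n ≥ N` there is
an admissible word of length `n+1` from `a` to `b`. -/
def TopMixing : Prop :=
  ∀ a b : S, ∃ N : ℕ, ∀ n ≥ N, ∃ w : ℕ → S,
    w 0 = a ∧ w n = b ∧ ∀ i < n, A (w i) (w (i + 1))

/-- Birkhoff sums. -/
noncomputable def birk (φ : CMS A → ℝ) (n : ℕ) (x : CMS A) : ℝ :=
  ∑ k ∈ Finset.range n, φ ((shiftA A)^[k] x)

/-- Gurevich partition function `Z_n(φ,a)`, valued in `ℝ≥0∞`. -/
noncomputable def Zfun (φ : CMS A → ℝ) (a : S) (n : ℕ) : ℝ≥0∞ :=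
  ∑' x : {x : CMS A // (shiftA A)^[n] x = x ∧ x.1 0 = a},
    ENNReal.ofReal (Real.exp (birk A φ n x))

/-- Restricted partition function `Z*_n(φ,a)` over first returns, valued in `ℝ≥0∞`. -/
noncomputable def Zstar (φ : CMS A → ℝ) (a : S) (n : ℕ) : ℝ≥0∞ :=
  ∑' x : {x : CMS A // ((shiftA A)^[n] x = x ∧ x.1 0 = a) ∧
      ∀ i, 1 ≤ i → i ≤ n - 1 → x.1 i ≠ a},
    ENNReal.ofReal (Real.exp (birk A φ n x))

/-- `φ` has Gurevich pressure `P` witnessed at the state `a`: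
`Z_n(φ,a)^{1/n} → e^P`, i.e. `(1/n) log Z_n(φ,a) → P`. -/
def HasGurPressure (φ : CMS A → ℝ) (a : S) (P : ℝ) : Prop :=
  Tendsto (fun n : ℕ => Zfun A φ a n ^ (1 / (n : ℝ))) atTop
    (𝓝 (ENNReal.ofReal (Real.exp P)))

/-- Strong positive recurrence at the state `a`, for pressure `P`:
`limsup (1/n) log Z*_n(φ,a) < P`. -/
noncomputable def SPRat (φ : CMS A → ℝ) (a : S) (P : ℝ) : Prop :=
  Filter.atTop.limsup (fun n : ℕ => Zstar A φ a n ^ (1 / (n : ℝ)))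
    < ENNReal.ofReal (Real.exp P)

/-- `φ` is `θ`-weakly Hölder continuous: `var_n(φ) ≤ C θ^n` for all `n ≥ 2`. -/
def WeakHolder (θ : ℝ) (φ : CMS A → ℝ) : Prop :=
  ∃ C > (0:ℝ), ∀ n : ℕ, 2 ≤ n → ∀ x y : CMS A,
    (∀ i < n, x.1 i = y.1 i) → |φ x - φ y| ≤ C * θ ^ n

/-- `φ` is locally `θ`-Hölder continuous: weakly Hölder with `var₁(φ) < ∞`. -/
def LocHolder (θ : ℝ) (φ : CMS A → ℝ) : Prop :=
  WeakHolder A θ φ ∧ ∃ M : ℝ, ∀ x y : CMS A, x.1 0 = y.1 0 → |φ x - φ y| ≤ M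

/-- The set `A_θ` of `θ`-weakly Hölder, strongly positive recurrent potentials with finite
Gurevich pressure. -/
def Atheta (θ : ℝ) : Set (CMS A → ℝ) :=
  {φ | WeakHolder A θ φ ∧ ∃ (a : S) (P : ℝ), HasGurPressure A φ a P ∧ SPRat A φ a P}

/-- First disagreement time `t(x,y)`. -/
noncomputable def sepT (x y : CMS A) : ℕ := sInf {k | x.1 k ≠ y.1 k}

/-- The Hölder distance `d_θ(φ,τ) = ‖φ-τ‖_∞ + |φ-τ|_θ`, valued in `ℝ≥0∞`. -/
noncomputable def dTheta (θ : ℝ) (φ τ : CMS A → ℝ) : ℝ≥0∞ :=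
  (⨆ x : CMS A, edist (φ x) (τ x)) +
    ⨆ (x : CMS A) (y : CMS A) (_ : x ≠ y),
      edist (φ x - τ x) (φ y - τ y) / ENNReal.ofReal (θ ^ sepT A x y)

/-- The `n`-th variation of `φ`, valued in `ℝ≥0∞`. -/
noncomputable def eVarA (φ : CMS A → ℝ) (n : ℕ) : ℝ≥0∞ :=
  ⨆ (x : CMS A) (y : CMS A) (_ : ∀ i < n, x.1 i = y.1 i), edist (φ x) (φ y)

open scoped Classical in
/-- `s_a(x,y)`: the number of `i < t(x,y)` with `x_i = y_i = a`. -/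
noncomputable def sCount (a : S) (x y : CMS A) : ℕ :=
  ((Finset.range (sepT A x y)).filter (fun i => x.1 i = a ∧ y.1 i = a)).card

/-- The norm of the Banach space `𝓑` on which the Ruelle operator of a strongly positive
recurrent potential acts with a spectral gap (valued in `ℝ≥0∞`). -/
noncomputable def Bnorm (θ : ℝ) (a : S) (h₀sup : S → ℝ) (f : CMS A → ℝ) : ℝ≥0∞ :=
  ⨆ b : S, (ENNReal.ofReal (h₀sup b))⁻¹ *
    ((⨆ (x : CMS A) (_ : x.1 0 = b), ENNReal.ofReal |f x|) +
      ⨆ (x : CMS A) (y : CMS A) (_ : x.1 0 = b) (_ : y.1 0 = b) (_ : x ≠ y),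
        edist (f x) (f y) / ENNReal.ofReal (θ ^ sCount A a x y))

/-- The Ruelle operator `L_φ` (pointwise, via `tsum`). -/
noncomputable def Lop (φ : CMS A → ℝ) (f : CMS A → ℝ) : CMS A → ℝ :=
  fun x => ∑' y : {y : CMS A // shiftA A y = x}, Real.exp (φ y.1) * f y.1

section Helpers

lemma exp_sub_one_le_mul (w : ℝ) : Real.exp w - 1 ≤ w * Real.exp w := by
  have h := Real.add_one_le_exp (-w)
  have h2 := Real.exp_pos w
  have h3 : Real.exp (-w) * Real.exp w = 1 := by
    rw [← Real.exp_add]; simp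
  nlinarith

lemma abs_one_sub_exp_le (w : ℝ) : |1 - Real.exp w| ≤ Real.exp |w| - 1 := by
  rcases le_or_gt 0 w with h | h
  · rw [abs_of_nonneg h, abs_of_nonpos (by linarith [Real.one_le_exp h])]
    linarith
  · rw [abs_of_neg h, abs_of_nonneg (by linarith [Real.exp_lt_one_iff.mpr h])]
    have h1 := Real.add_one_le_exp w
    have h2 := Real.add_one_le_exp (-w)
    linarith

lemma abs_exp_sub_exp_le (u v : ℝ) :
    |Real.exp u - Real.exp v| ≤ Real.exp u * (Real.exp |u - v| - 1) := by
  have : Real.exp u - Real.exp v = Real.exp u * (1 - Real.exp (v - u)) := by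
    rw [mul_sub, mul_one, ← Real.exp_add]; ring_nf
  rw [this, abs_mul, abs_of_pos (Real.exp_pos u)]
  have h1 := abs_one_sub_exp_le (v - u)
  rw [abs_sub_comm v u] at h1
  exact mul_le_mul_of_nonneg_left h1 (Real.exp_pos u).le

variable {S : Type} {A : S → S → Prop}

/-- Prepend a state to a sequence. -/
def consA (z : S) (x : CMS A) (h : A z (x.1 0)) : CMS A :=
  ⟨fun n => Nat.casesOn n z (fun m => x.1 m), by
    intro i
    cases i with
    | zero => exact h
    | succ m => exact x.2 m⟩

@[simp] lemma consA_zero (z : S) (x : CMS A) (h : A z (x.1 0)) : (consA z x h).1 0 = z := rfl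

@[simp] lemma consA_succ (z : S) (x : CMS A) (h : A z (x.1 0)) (n : ℕ) :
    (consA z x h).1 (n + 1) = x.1 n := rfl

@[simp] lemma shiftA_consA (z : S) (x : CMS A) (h : A z (x.1 0)) :
    shiftA A (consA z x h) = x := Subtype.ext (funext fun _ => rfl)

/-- Preimages of `x` under the shift are in bijection with states that can precede `x 0`. -/
noncomputable def preEquiv (x : CMS A) :
    {z : S // A z (x.1 0)} ≃ {y : CMS A // shiftA A y = x} where
  toFun z := ⟨consA z.1 x z.2, shiftA_consA z.1 x z.2⟩
  invFun y := ⟨y.1.1 0, by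
    have h1 : y.1.1 1 = x.1 0 := congrFun (congrArg Subtype.val y.2) 0
    have := y.1.2 0
    rwa [h1] at this⟩
  left_inv z := rfl
  right_inv y := by
    apply Subtype.ext; apply Subtype.ext; funext n
    cases n with
    | zero => rfl
    | succ m =>
      exact (congrFun (congrArg Subtype.val y.2) m).symm

end Helpers
section Helpers2

variable {S : Type} {A : S → S → Prop}

lemma exists_ne_of_ne {x y : CMS A} (h : x ≠ y) : ∃ k, x.1 k ≠ y.1 k := by
  by_contra hc
  push_neg at hc
  exact h (Subtype.ext (funext hc))

lemma sepT_mem {x y : CMS A} (h : x ≠ y) : x.1 (sepT A x y) ≠ y.1 (sepT A x y) :=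
  Nat.sInf_mem (exists_ne_of_ne h)

lemma sepT_agree {x y : CMS A} {i : ℕ} (h : i < sepT A x y) : x.1 i = y.1 i := by
  by_contra hc
  exact absurd (Nat.sInf_le hc) (not_le.mpr h)

lemma sepT_pos {x y : CMS A} (h : x ≠ y) (h0 : x.1 0 = y.1 0) : 1 ≤ sepT A x y := by
  rcases Nat.eq_zero_or_pos (sepT A x y) with h1 | h1
  · exact absurd (h1 ▸ sepT_mem h) (not_not.mpr h0)
  · exact h1

lemma consA_ne {z : S} {x y : CMS A} (hx : A z (x.1 0)) (hy : A z (y.1 0)) (h : x ≠ y) :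
    consA z x hx ≠ consA z y hy := by
  intro hc
  obtain ⟨k, hk⟩ := exists_ne_of_ne h
  exact hk (congrFun (congrArg Subtype.val hc) (k + 1))

lemma sepT_consA {z : S} {x y : CMS A} (hx : A z (x.1 0)) (hy : A z (y.1 0)) (h : x ≠ y) :
    sepT A (consA z x hx) (consA z y hy) = sepT A x y + 1 := by
  apply le_antisymm
  · apply Nat.sInf_le
    simpa using sepT_mem h
  · by_contra hc
    push_neg at hc
    have hmem := sepT_mem (consA_ne hx hy h)
    set m := sepT A (consA z x hx) (consA z y hy) with hm
    cases hn : m with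
    | zero => rw [hn] at hmem; exact hmem rfl
    | succ k =>
      rw [hn] at hmem
      simp only [consA_succ] at hmem
      have : k < sepT A x y := by omega
      exact hmem (sepT_agree this)

lemma sCount_le_sepT (a : S) (x y : CMS A) : sCount A a x y ≤ sepT A x y := by
  classical
  calc sCount A a x y ≤ (Finset.range (sepT A x y)).card := Finset.card_filter_le _ _
    _ = sepT A x y := Finset.card_range _

lemma sCount_le_consA (a : S) {z : S} {x y : CMS A} (hx : A z (x.1 0)) (hy : A z (y.1 0))
    (h : x ≠ y) : sCount A a x y ≤ sCount A a (consA z x hx) (consA z y hy) := by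
  classical
  unfold sCount
  rw [sepT_consA hx hy h]
  apply Finset.card_le_card_of_injOn (fun i => i + 1)
  · intro i hi
    simp only [Finset.coe_filter, Finset.mem_coe, Finset.mem_filter, Finset.mem_range, Set.mem_setOf_eq] at hi ⊢
    exact ⟨by omega, by simpa using hi.2⟩
  · intro i _ j _ hij
    simpa using hij

end Helpers2
section Helpers3

lemma ennreal_le_of_inv_mul_le {h : ℝ} (hh : 0 < h) {X : ℝ≥0∞}
    (hX : (ENNReal.ofReal h)⁻¹ * X ≤ 1) : X ≤ ENNReal.ofReal h := by
  have h0 : ENNReal.ofReal h ≠ 0 := by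
    simp [ENNReal.ofReal_eq_zero, not_le, hh]
  have hT : ENNReal.ofReal h ≠ ⊤ := ENNReal.ofReal_ne_top
  calc X = ENNReal.ofReal h * ((ENNReal.ofReal h)⁻¹ * X) := by
        rw [← mul_assoc, ENNReal.mul_inv_cancel h0 hT, one_mul]
    _ ≤ ENNReal.ofReal h * 1 := mul_le_mul_right hX _
    _ = _ := mul_one _

lemma ennreal_inv_mul_le_of_le {h ε : ℝ} (hh : 0 < h) (hε : 0 ≤ ε) {X : ℝ≥0∞}
    (hX : X ≤ ENNReal.ofReal (ε * h)) : (ENNReal.ofReal h)⁻¹ * X ≤ ENNReal.ofReal ε := by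
  have h0 : ENNReal.ofReal h ≠ 0 := by
    simp [ENNReal.ofReal_eq_zero, not_le, hh]
  have hT : ENNReal.ofReal h ≠ ⊤ := ENNReal.ofReal_ne_top
  calc (ENNReal.ofReal h)⁻¹ * X ≤ (ENNReal.ofReal h)⁻¹ * ENNReal.ofReal (ε * h) :=
        mul_le_mul_right hX _
    _ = (ENNReal.ofReal h)⁻¹ * (ENNReal.ofReal h * ENNReal.ofReal ε) := by
        rw [ENNReal.ofReal_mul hε, mul_comm (ENNReal.ofReal ε)]
    _ = ENNReal.ofReal ε := by
        rw [← mul_assoc, ENNReal.inv_mul_cancel h0 hT, one_mul]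

lemma ennreal_div_extract {r B : ℝ} {X : ℝ≥0∞} (hr : 0 < r) (hB : 0 ≤ B)
    (hX : X / ENNReal.ofReal r ≤ ENNReal.ofReal B) : X ≤ ENNReal.ofReal (B * r) := by
  have h0 : ENNReal.ofReal r ≠ 0 := by
    simp [ENNReal.ofReal_eq_zero, not_le, hr]
  rw [ENNReal.ofReal_mul hB]
  exact (ENNReal.div_le_iff_le_mul (Or.inl h0) (Or.inl ENNReal.ofReal_ne_top)).mp hX

lemma ennreal_div_le {r B : ℝ} {X : ℝ≥0∞} (hX : X ≤ ENNReal.ofReal (B * r)) (hB : 0 ≤ B) :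
    X / ENNReal.ofReal r ≤ ENNReal.ofReal B := by
  apply ENNReal.div_le_of_le_mul
  rw [← ENNReal.ofReal_mul hB]
  exact hX

end Helpers3
section Helpers4

lemma exp_abs_sub_one_le' {v d m : ℝ} (hv : |v| ≤ d) (hd : d ≤ m) :
    Real.exp |v| - 1 ≤ d * Real.exp m := by
  have h1 := exp_sub_one_le_mul |v|
  have h2 : Real.exp |v| ≤ Real.exp m := Real.exp_le_exp.mpr (le_trans hv hd)
  nlinarith [abs_nonneg v, Real.exp_pos |v|]

lemma key_sup {δ P Q F H : ℝ} (hδ0 : 0 ≤ δ) (hδ1 : δ ≤ 1)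
    (hPQ : |P - Q| ≤ δ) (hF : |F| ≤ H) :
    |(Real.exp P - Real.exp Q) * F| ≤ δ * Real.exp 1 * (Real.exp P * H) := by
  have e1 : |Real.exp P - Real.exp Q| ≤ Real.exp P * (δ * Real.exp 1) := by
    have h1 := abs_exp_sub_exp_le P Q
    have h2 := exp_abs_sub_one_le' hPQ hδ1
    nlinarith [Real.exp_pos P]
  rw [abs_mul]
  have hH : 0 ≤ H := le_trans (abs_nonneg F) hF
  nlinarith [mul_le_mul e1 hF (abs_nonneg F) (by positivity : (0:ℝ) ≤ Real.exp P * (δ * Real.exp 1))]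

set_option maxHeartbeats 1000000 in
lemma key_lip {δ θ C K0 : ℝ} {n s : ℕ} {P Q P' Q' F F' H : ℝ}
    (hδ0 : 0 ≤ δ) (hδ1 : δ ≤ 1) (hθ0 : 0 ≤ θ) (hθ1 : θ ≤ 1) (hC : 0 ≤ C) (hH : 0 ≤ H)
    (hns : θ ^ n ≤ θ ^ s)
    (hK0e : Real.exp 1 ≤ K0) (hK0c : C * Real.exp (C + 1) + Real.exp 3 ≤ K0)
    (hPQ : |P - Q| ≤ δ) (hPQ' : |P' - Q'| ≤ δ)
    (hPP' : |P - P'| ≤ C * θ ^ n)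
    (hsem : |(P - Q) - (P' - Q')| ≤ δ * θ ^ n)
    (hFF' : |F - F'| ≤ H * θ ^ s) (hF' : |F'| ≤ H) :
    |(Real.exp P - Real.exp Q) * F - (Real.exp P' - Real.exp Q') * F'| ≤
      δ * θ ^ s * K0 * (Real.exp P * H + Real.exp P' * H) := by
  have hθn1 : θ ^ n ≤ 1 := pow_le_one₀ hθ0 hθ1
  have hθn0 : 0 ≤ θ ^ n := pow_nonneg hθ0 n
  have hθs0 : 0 ≤ θ ^ s := pow_nonneg hθ0 s
  have e1 : |Real.exp P - Real.exp Q| ≤ Real.exp P * (δ * Real.exp 1) := by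
    have h1 := abs_exp_sub_exp_le P Q
    have h2 := exp_abs_sub_one_le' hPQ hδ1
    nlinarith [Real.exp_pos P]
  have e3 : |Real.exp P - Real.exp P'| ≤ Real.exp P' * ((C * θ ^ n) * Real.exp C) := by
    have h1 := abs_exp_sub_exp_le P' P
    rw [abs_sub_comm (Real.exp P') (Real.exp P), abs_sub_comm P' P] at h1
    have hCn : C * θ ^ n ≤ C := by nlinarith
    have h2 := exp_abs_sub_one_le' hPP' hCn
    nlinarith [Real.exp_pos P']
  have e4 : |1 - Real.exp (Q - P)| ≤ δ * Real.exp 1 := by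
    have h1 := abs_one_sub_exp_le (Q - P)
    have h2 : |Q - P| ≤ δ := by rw [abs_sub_comm]; exact hPQ
    have h3 := exp_abs_sub_one_le' h2 hδ1
    linarith
  have e5 : |Real.exp (Q' - P') - Real.exp (Q - P)| ≤ Real.exp 1 * ((δ * θ ^ n) * Real.exp 1) := by
    have h1 := abs_exp_sub_exp_le (Q' - P') (Q - P)
    have h2 : Real.exp (Q' - P') ≤ Real.exp 1 := by
      apply Real.exp_le_exp.mpr
      have : Q' - P' ≤ |Q' - P'| := le_abs_self _
      have h4 : |Q' - P'| ≤ δ := by rw [abs_sub_comm]; exact hPQ'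
      linarith
    have h5 : |(Q' - P') - (Q - P)| ≤ δ * θ ^ n := by
      have : (Q' - P') - (Q - P) = (P - Q) - (P' - Q') := by ring
      rw [this]; exact hsem
    have h6 : δ * θ ^ n ≤ 1 := by nlinarith
    have h7 := exp_abs_sub_one_le' h5 (le_refl (δ * θ ^ n))
    -- exp |..| - 1 ≤ (δ θ^n) * exp (δ θ^n) ; bound exp (δ θ^n) ≤ exp 1
    have h8 : Real.exp (δ * θ ^ n) ≤ Real.exp 1 := Real.exp_le_exp.mpr h6
    have h9 : Real.exp |(Q' - P') - (Q - P)| - 1 ≤ (δ * θ ^ n) * Real.exp 1 := by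
      nlinarith [mul_le_mul_of_nonneg_left h8 (by positivity : (0:ℝ) ≤ δ * θ ^ n)]
    calc |Real.exp (Q' - P') - Real.exp (Q - P)|
        ≤ Real.exp (Q' - P') * (Real.exp |(Q' - P') - (Q - P)| - 1) := h1
      _ ≤ Real.exp 1 * ((δ * θ ^ n) * Real.exp 1) :=
          mul_le_mul h2 h9 (sub_nonneg.mpr (Real.one_le_exp (abs_nonneg _)))
            (Real.exp_pos 1).le
  have hidty : (Real.exp P - Real.exp Q) - (Real.exp P' - Real.exp Q') =
      (Real.exp P - Real.exp P') * (1 - Real.exp (Q - P)) +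
        Real.exp P' * (Real.exp (Q' - P') - Real.exp (Q - P)) := by
    rw [Real.exp_sub, Real.exp_sub]
    field_simp
    ring
  have hR : |(Real.exp P - Real.exp Q) - (Real.exp P' - Real.exp Q')| ≤
      Real.exp P' * ((C * Real.exp (C + 1) + Real.exp 3) * (δ * θ ^ n)) := by
    rw [hidty]
    refine (abs_add_le _ _).trans ?_
    rw [abs_mul, abs_mul, abs_of_pos (Real.exp_pos P')]
    have hee : Real.exp 1 * Real.exp 1 ≤ Real.exp 3 := by
      rw [← Real.exp_add]
      exact Real.exp_le_exp.mpr (by norm_num)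
    have hC1 : Real.exp C * Real.exp 1 = Real.exp (C + 1) := by rw [← Real.exp_add]
    have hprod1 : |Real.exp P - Real.exp P'| * |1 - Real.exp (Q - P)| ≤
        (Real.exp P' * ((C * θ ^ n) * Real.exp C)) * (δ * Real.exp 1) :=
      mul_le_mul e3 e4 (abs_nonneg _) (by positivity)
    have hprod2 : Real.exp P' * |Real.exp (Q' - P') - Real.exp (Q - P)| ≤
        Real.exp P' * (Real.exp 1 * ((δ * θ ^ n) * Real.exp 1)) :=
      mul_le_mul_of_nonneg_left e5 (Real.exp_pos P').le
    have h1' : (Real.exp P' * ((C * θ ^ n) * Real.exp C)) * (δ * Real.exp 1) =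
        Real.exp P' * ((C * Real.exp (C + 1)) * (δ * θ ^ n)) := by
      rw [← hC1]; ring
    have h2' : Real.exp P' * (Real.exp 1 * ((δ * θ ^ n) * Real.exp 1)) ≤
        Real.exp P' * (Real.exp 3 * (δ * θ ^ n)) := by
      apply mul_le_mul_of_nonneg_left ?_ (Real.exp_pos P').le
      nlinarith [mul_nonneg hδ0 hθn0]
    linarith [hprod1.trans_eq h1', le_trans hprod2 h2']
  -- split into two terms
  have hsplit : (Real.exp P - Real.exp Q) * F - (Real.exp P' - Real.exp Q') * F' =
      (Real.exp P - Real.exp Q) * (F - F') +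
        ((Real.exp P - Real.exp Q) - (Real.exp P' - Real.exp Q')) * F' := by ring
  rw [hsplit]
  refine (abs_add_le _ _).trans ?_
  rw [abs_mul, abs_mul]
  have hT1 : |Real.exp P - Real.exp Q| * |F - F'| ≤
      (Real.exp P * (δ * Real.exp 1)) * (H * θ ^ s) :=
    mul_le_mul e1 hFF' (abs_nonneg _) (by positivity)
  have hT2 : |(Real.exp P - Real.exp Q) - (Real.exp P' - Real.exp Q')| * |F'| ≤
      (Real.exp P' * ((C * Real.exp (C + 1) + Real.exp 3) * (δ * θ ^ n))) * H :=
    mul_le_mul hR hF' (abs_nonneg _) (by positivity)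
  have hA1 : (Real.exp P * (δ * Real.exp 1)) * (H * θ ^ s) ≤
      δ * θ ^ s * K0 * (Real.exp P * H) := by
    nlinarith [mul_nonneg (mul_nonneg (mul_nonneg hδ0 hθs0) (Real.exp_pos P).le) hH,
      Real.exp_pos P]
  have hA2 : (Real.exp P' * ((C * Real.exp (C + 1) + Real.exp 3) * (δ * θ ^ n))) * H ≤
      δ * θ ^ s * K0 * (Real.exp P' * H) := by
    have hcoeff : 0 ≤ C * Real.exp (C + 1) + Real.exp 3 := by positivity
    have hkey : (C * Real.exp (C + 1) + Real.exp 3) * θ ^ n ≤ K0 * θ ^ s :=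
      mul_le_mul hK0c hns hθn0 (le_trans hcoeff hK0c)
    nlinarith [mul_nonneg (mul_nonneg hδ0 (Real.exp_pos P').le) hH,
      mul_le_mul_of_nonneg_left hkey
        (mul_nonneg (mul_nonneg hδ0 (Real.exp_pos P').le) hH)]
  linarith [le_trans hT1 hA1, le_trans hT2 hA2]

end Helpers4
section Helpers5

variable {S : Type} {A : S → S → Prop}

lemma hasSum_cons (g : CMS A → ℝ) (x : CMS A) {s : ℝ}
    (h : HasSum (fun y : {y : CMS A // shiftA A y = x} => g y.1) s) :
    HasSum (fun z : {z : S // A z (x.1 0)} => g (consA z.1 x z.2)) s :=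
  (Equiv.hasSum_iff (preEquiv x)).mpr h

lemma tsum_cons (g : CMS A → ℝ) (x : CMS A) :
    (∑' y : {y : CMS A // shiftA A y = x}, g y.1) =
      ∑' z : {z : S // A z (x.1 0)}, g (consA z.1 x z.2) :=
  ((preEquiv x).tsum_eq (fun y : {y : CMS A // shiftA A y = x} => g y.1)).symm

lemma hasSum_cons' (g : CMS A → ℝ) {x y : CMS A} (hxy : x.1 0 = y.1 0) {s : ℝ}
    (h : HasSum (fun z : {z : S // A z (y.1 0)} => g (consA z.1 y z.2)) s) :
    HasSum (fun z : {z : S // A z (x.1 0)} => g (consA z.1 y (hxy ▸ z.2))) s :=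
  (Equiv.hasSum_iff (Equiv.subtypeEquivRight (fun z => by rw [hxy]))).mpr h

lemma tsum_cons' (g : CMS A → ℝ) {x y : CMS A} (hxy : x.1 0 = y.1 0) :
    (∑' z : {z : S // A z (y.1 0)}, g (consA z.1 y z.2)) =
      ∑' z : {z : S // A z (x.1 0)}, g (consA z.1 y (hxy ▸ z.2)) :=
  ((Equiv.subtypeEquivRight (fun z => by rw [hxy])).tsum_eq
    (fun z : {z : S // A z (y.1 0)} => g (consA z.1 y z.2))).symm

end Helpers5

lemma abs_tsum_le_of_le {ι : Type} {g B : ι → ℝ} (h1 : ∀ i, |g i| ≤ B i) (hB : Summable B) :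
    |∑' i, g i| ≤ ∑' i, B i := by
  have hg : Summable fun i => |g i| :=
    Summable.of_nonneg_of_le (fun i => abs_nonneg _) h1 hB
  calc |∑' i, g i| = ‖∑' i, g i‖ := (Real.norm_eq_abs _).symm
    _ ≤ ∑' i, ‖g i‖ := norm_tsum_le_tsum_norm (by simpa [Real.norm_eq_abs] using hg)
    _ = ∑' i, |g i| := by simp [Real.norm_eq_abs]
    _ ≤ ∑' i, B i := Summable.tsum_le_tsum h1 hg hB
set_option maxHeartbeats 1000000 in
/-- **Lemma (the Ruelle operator depends continuously on the potential).**
Let `Σ_A` be a topologically mixing CMS, `φ` locally `θ`-Hölder, strongly positive recurrent,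
with `P_G(φ) = 0`.  Fix a state `a`, constants `ε_a, p > 0` with `θ e^p < 1`, set
`ψ = φ + ε_a − p·1_{[a]}` and `c = exp(∑_{k≥2} var_k(φ))`, and let `h₀ > 0` be continuous with
`L_ψ h₀ = h₀`, `h₀[b] = sup_{[b]} h₀ < ∞` for every state `b`, and `h₀(x) ≥ c⁻¹ h₀[x₀]`.
Then for every `ε > 0` there is `δ > 0` such that every locally `θ`-Hölder strongly positive
recurrent potential `τ` with `P_G(τ) = 0` and `‖φ − τ‖_θ < δ` satisfies
`‖L_φ f − L_τ f‖_𝓑 ≤ ε` whenever `‖f‖_𝓑 ≤ 1`, i.e. `‖L_φ − L_τ‖ ≤ ε` on `(𝓑, ‖·‖_𝓑)`. -/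
theorem ruelle_operator_continuity
    (hA : ∀ a : S, ∃ b, A a b) (hA' : ∀ b : S, ∃ a, A a b)
    (hmix : TopMixing A)
    (θ : ℝ) (hθ : θ ∈ Set.Ioo (0:ℝ) 1)
    (φ : CMS A → ℝ) (hloc : LocHolder A θ φ)
    (hP : ∃ a' : S, HasGurPressure A φ a' 0)
    (hSPR : ∃ a' : S, SPRat A φ a' 0)
    (a : S) (εa p : ℝ) (hεa : 0 < εa) (hp : 0 < p)
    (hθp : θ * Real.exp p < 1)
    (h₀ : CMS A → ℝ) (h₀cont : Continuous h₀) (h₀pos : ∀ x, 0 < h₀ x)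
    (h₀eig : ∀ x : CMS A, HasSum
      (fun y : {y : CMS A // shiftA A y = x} =>
        Real.exp (φ y.1 + εa - ({x : CMS A | x.1 0 = a}.indicator (fun _ => p) y.1)) * h₀ y.1) (h₀ x))
    (h₀sup : S → ℝ)
    (hsup : ∀ b : S, IsLUB {r : ℝ | ∃ x : CMS A, x.1 0 = b ∧ h₀ x = r} (h₀sup b))
    (hlow : ∀ x : CMS A,
      (Real.exp ((∑' k : ℕ, eVarA A φ (k + 2)).toReal))⁻¹ * h₀sup (x.1 0) ≤ h₀ x) :
    ∀ ε > (0:ℝ), ∃ δ > (0:ℝ), ∀ τ : CMS A → ℝ,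
      LocHolder A θ τ →
      (∃ a' : S, HasGurPressure A τ a' 0) →
      (∃ a' : S, SPRat A τ a' 0) →
      dTheta A θ φ τ < ENNReal.ofReal δ →
      ∀ f : CMS A → ℝ, Bnorm A θ a h₀sup f ≤ 1 →
        Bnorm A θ a h₀sup (fun x => Lop A φ f x - Lop A τ f x) ≤ ENNReal.ofReal ε := by
  classical
  obtain ⟨⟨C, hC, hvar⟩, -⟩ := hloc
  obtain ⟨hθ0, hθ1⟩ := hθ
  set c : ℝ := Real.exp ((∑' k : ℕ, eVarA A φ (k + 2)).toReal) with hcdef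
  have hc0 : 0 < c := Real.exp_pos _
  set M : ℝ := c * Real.exp p with hMdef
  have hM0 : 0 < M := mul_pos hc0 (Real.exp_pos _)
  set K0 : ℝ := Real.exp 1 + (C * Real.exp (C + 1) + Real.exp 3) with hK0def
  have hK0e : Real.exp 1 ≤ K0 := by nlinarith [Real.exp_pos (C + 1), Real.exp_pos 3]
  have hK0c : C * Real.exp (C + 1) + Real.exp 3 ≤ K0 := by nlinarith [Real.exp_pos 1]
  have hK00 : 0 < K0 := lt_of_lt_of_le (Real.exp_pos 1) hK0e
  set K : ℝ := M * (Real.exp 1 + 2 * K0) + 1 with hKdef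
  have hKpos : 0 < K := by nlinarith [Real.exp_pos 1]
  intro ε hε
  set δ : ℝ := min 1 (ε / K) with hδdef
  have hδ0 : 0 < δ := lt_min one_pos (div_pos hε hKpos)
  have hδ1 : δ ≤ 1 := min_le_left _ _
  have hδK : δ * K ≤ ε := by
    have h1 : δ ≤ ε / K := min_le_right _ _
    calc δ * K ≤ (ε / K) * K := mul_le_mul_of_nonneg_right h1 hKpos.le
      _ = ε := div_mul_cancel₀ ε (ne_of_gt hKpos)
  refine ⟨δ, hδ0, ?_⟩
  intro τ hτ _ _ hd f hf
  -- ### extraction from the Hölder distance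
  have hτδ : ∀ w : CMS A, |φ w - τ w| ≤ δ := by
    intro w
    have h1 : edist (φ w) (τ w) ≤ ENNReal.ofReal δ := by
      refine le_of_lt (lt_of_le_of_lt ?_ hd)
      refine le_trans (le_iSup (fun x : CMS A => edist (φ x) (τ x)) w) ?_
      exact le_self_add
    rw [edist_dist, Real.dist_eq] at h1
    exact (ENNReal.ofReal_le_ofReal_iff hδ0.le).mp h1
  have hsem : ∀ x y : CMS A, x ≠ y →
      |(φ x - τ x) - (φ y - τ y)| ≤ δ * θ ^ sepT A x y := by
    intro x y hne
    have h1 : edist (φ x - τ x) (φ y - τ y) / ENNReal.ofReal (θ ^ sepT A x y)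
        ≤ ENNReal.ofReal δ := by
      refine le_of_lt (lt_of_le_of_lt ?_ hd)
      refine le_trans ?_ le_add_self
      exact le_iSup_of_le x (le_iSup_of_le y (le_iSup_of_le hne le_rfl))
    have h2 := ennreal_div_extract (pow_pos hθ0 _) hδ0.le h1
    rw [edist_dist, Real.dist_eq] at h2
    exact (ENNReal.ofReal_le_ofReal_iff (mul_nonneg hδ0.le (pow_nonneg hθ0.le _))).mp h2
  -- ### cylinders are nonempty, bounds on h₀sup
  have hcyl : ∀ b : S, ∃ x : CMS A, x.1 0 = b := by
    intro b
    by_contra hcon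
    push_neg at hcon
    have hub : (h₀sup b - 1) ∈ upperBounds {r : ℝ | ∃ x : CMS A, x.1 0 = b ∧ h₀ x = r} := by
      rintro r ⟨x, hx, -⟩
      exact absurd hx (hcon x)
    have := (hsup b).2 hub
    linarith
  have hsupp : ∀ b : S, 0 < h₀sup b := by
    intro b
    obtain ⟨x, hx⟩ := hcyl b
    exact lt_of_lt_of_le (h₀pos x) ((hsup b).1 ⟨x, hx, rfl⟩)
  have hsuple : ∀ x : CMS A, h₀ x ≤ h₀sup (x.1 0) := fun x => (hsup (x.1 0)).1 ⟨x, rfl, rfl⟩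
  have hlow' : ∀ x : CMS A, h₀sup (x.1 0) ≤ c * h₀ x := by
    intro x
    have h1 := hlow x
    have h2 := mul_le_mul_of_nonneg_left h1 hc0.le
    rw [← mul_assoc, mul_inv_cancel₀ (ne_of_gt hc0), one_mul] at h2
    exact h2
  -- ### the eigen-term
  set Et : CMS A → ℝ := fun w =>
    Real.exp (φ w + εa - Set.indicator {x : CMS A | x.1 0 = a} (fun _ => p) w) * h₀ w
    with hEtdef
  have hEt0 : ∀ w, 0 ≤ Et w := by
    intro w
    simp only [hEtdef]
    exact mul_nonneg (Real.exp_pos _).le (h₀pos w).le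
  have hEig : ∀ x : CMS A, HasSum
      (fun z : {z : S // A z (x.1 0)} => Et (consA z.1 x z.2)) (h₀ x) := by
    intro x
    apply hasSum_cons Et x
    simp only [hEtdef]
    exact h₀eig x
  have hEtphi : ∀ w : CMS A, Real.exp (φ w) * h₀sup (w.1 0) ≤ M * Et w := by
    intro w
    have hind : Set.indicator {x : CMS A | x.1 0 = a} (fun _ => p) w ≤ p := by
      by_cases hw : w ∈ {x : CMS A | x.1 0 = a}
      · rw [Set.indicator_of_mem hw]
      · rw [Set.indicator_of_notMem hw]; exact hp.le
    have h1 : Real.exp (φ w) ≤ Real.exp p *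
        Real.exp (φ w + εa - Set.indicator {x : CMS A | x.1 0 = a} (fun _ => p) w) := by
      rw [← Real.exp_add]
      exact Real.exp_le_exp.mpr (by linarith)
    have h2 := hlow' w
    have h3 : Real.exp (φ w) * h₀sup (w.1 0) ≤
        (Real.exp p * Real.exp (φ w + εa -
          Set.indicator {x : CMS A | x.1 0 = a} (fun _ => p) w)) * (c * h₀ w) :=
      mul_le_mul h1 h2 (hsupp (w.1 0)).le (by positivity)
    refine h3.trans_eq ?_
    simp only [hEtdef, hMdef]
    ring
  -- ### extraction from ‖f‖_𝓑 ≤ 1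
  simp only [Bnorm, iSup_le_iff] at hf
  have hX : ∀ b : S,
      ((⨆ (x : CMS A) (_ : x.1 0 = b), ENNReal.ofReal |f x|) +
        ⨆ (x : CMS A) (y : CMS A) (_ : x.1 0 = b) (_ : y.1 0 = b) (_ : x ≠ y),
          edist (f x) (f y) / ENNReal.ofReal (θ ^ sCount A a x y)) ≤
        ENNReal.ofReal (h₀sup b) := by
    intro b
    exact ennreal_le_of_inv_mul_le (hsupp b) (hf b)
  have hfs : ∀ x : CMS A, |f x| ≤ h₀sup (x.1 0) := by
    intro x
    have h1 : ENNReal.ofReal |f x| ≤ ENNReal.ofReal (h₀sup (x.1 0)) := by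
      refine le_trans ?_ (le_trans le_self_add (hX (x.1 0)))
      exact le_iSup_of_le x (le_iSup_of_le rfl le_rfl)
    exact (ENNReal.ofReal_le_ofReal_iff (hsupp _).le).mp h1
  have hflip : ∀ x y : CMS A, x.1 0 = y.1 0 → x ≠ y →
      |f x - f y| ≤ h₀sup (x.1 0) * θ ^ sCount A a x y := by
    intro x y hxy hne
    have h1 : edist (f x) (f y) / ENNReal.ofReal (θ ^ sCount A a x y) ≤
        ENNReal.ofReal (h₀sup (x.1 0)) := by
      refine le_trans ?_ (le_trans le_add_self (hX (x.1 0)))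
      exact le_iSup_of_le x (le_iSup_of_le y (le_iSup_of_le rfl
        (le_iSup_of_le hxy.symm (le_iSup_of_le hne le_rfl))))
    have h2 := ennreal_div_extract (pow_pos hθ0 _) (hsupp _).le h1
    rw [edist_dist, Real.dist_eq] at h2
    exact (ENNReal.ofReal_le_ofReal_iff
      (mul_nonneg (hsupp _).le (pow_nonneg hθ0.le _))).mp h2
  -- ### summability
  have hSumGen : ∀ (ρ : CMS A → ℝ), (∀ w, |φ w - ρ w| ≤ δ) →
      ∀ {ι : Type} (v : ι → CMS A) {s : ℝ}, HasSum (fun i => Et (v i)) s →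
      Summable (fun i => Real.exp (ρ (v i)) * f (v i)) := by
    intro ρ hρ ι v s hv
    rw [← summable_abs_iff]
    refine Summable.of_nonneg_of_le (fun i => abs_nonneg _) ?_
      ((hv.summable).mul_left (Real.exp 1 * M))
    intro i
    have h1 : Real.exp (ρ (v i)) ≤ Real.exp 1 * Real.exp (φ (v i)) := by
      rw [← Real.exp_add]
      apply Real.exp_le_exp.mpr
      have h2 := abs_le.mp (hρ (v i))
      linarith [h2.1]
    calc |Real.exp (ρ (v i)) * f (v i)| = Real.exp (ρ (v i)) * |f (v i)| := by
          rw [abs_mul, abs_of_pos (Real.exp_pos _)]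
      _ ≤ (Real.exp 1 * Real.exp (φ (v i))) * h₀sup ((v i).1 0) :=
          mul_le_mul h1 (hfs (v i)) (abs_nonneg _) (by positivity)
      _ = Real.exp 1 * (Real.exp (φ (v i)) * h₀sup ((v i).1 0)) := by ring
      _ ≤ Real.exp 1 * (M * Et (v i)) :=
          mul_le_mul_of_nonneg_left (hEtphi (v i)) (Real.exp_pos 1).le
      _ = Real.exp 1 * M * Et (v i) := by ring
  have hφδ : ∀ w : CMS A, |φ w - φ w| ≤ δ := fun w => by simp [hδ0.le]
  have hLopEq : ∀ (ρ : CMS A → ℝ) (x : CMS A), Lop A ρ f x =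
      ∑' z : {z : S // A z (x.1 0)},
        Real.exp (ρ (consA z.1 x z.2)) * f (consA z.1 x z.2) :=
    fun ρ x => tsum_cons (fun w => Real.exp (ρ w) * f w) x
  -- ### sup-part estimate
  have hDsup : ∀ x : CMS A, |Lop A φ f x - Lop A τ f x| ≤
      δ * Real.exp 1 * M * h₀sup (x.1 0) := by
    intro x
    have hs1 := hSumGen φ hφδ (fun z : {z : S // A z (x.1 0)} => consA z.1 x z.2) (hEig x)
    have hs2 := hSumGen τ hτδ (fun z : {z : S // A z (x.1 0)} => consA z.1 x z.2) (hEig x)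
    rw [hLopEq φ x, hLopEq τ x, ← Summable.tsum_sub hs1 hs2]
    have hptw : ∀ z : {z : S // A z (x.1 0)},
        |Real.exp (φ (consA z.1 x z.2)) * f (consA z.1 x z.2) -
          Real.exp (τ (consA z.1 x z.2)) * f (consA z.1 x z.2)| ≤
        δ * Real.exp 1 * M * Et (consA z.1 x z.2) := by
      intro z
      have h1 : |(Real.exp (φ (consA z.1 x z.2)) - Real.exp (τ (consA z.1 x z.2))) *
          f (consA z.1 x z.2)| ≤ δ * Real.exp 1 *
          (Real.exp (φ (consA z.1 x z.2)) * h₀sup ((consA z.1 x z.2).1 0)) :=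
        key_sup hδ0.le hδ1 (hτδ _) (hfs _)
      have h2 : δ * Real.exp 1 *
          (Real.exp (φ (consA z.1 x z.2)) * h₀sup ((consA z.1 x z.2).1 0)) ≤
          δ * Real.exp 1 * (M * Et (consA z.1 x z.2)) :=
        mul_le_mul_of_nonneg_left (hEtphi _) (mul_nonneg hδ0.le (Real.exp_pos 1).le)
      calc |Real.exp (φ (consA z.1 x z.2)) * f (consA z.1 x z.2) -
            Real.exp (τ (consA z.1 x z.2)) * f (consA z.1 x z.2)|
          = |(Real.exp (φ (consA z.1 x z.2)) - Real.exp (τ (consA z.1 x z.2))) *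
            f (consA z.1 x z.2)| := by rw [sub_mul]
        _ ≤ δ * Real.exp 1 * (M * Et (consA z.1 x z.2)) := h1.trans h2
        _ = δ * Real.exp 1 * M * Et (consA z.1 x z.2) := by ring
    refine le_trans
      (abs_tsum_le_of_le hptw (((hEig x).summable).mul_left (δ * Real.exp 1 * M))) ?_
    rw [((hEig x).mul_left (δ * Real.exp 1 * M)).tsum_eq]
    exact mul_le_mul_of_nonneg_left (hsuple x)
      (mul_nonneg (mul_nonneg hδ0.le (Real.exp_pos 1).le) hM0.le)
  -- ### Lipschitz-part estimate
  have hDlip : ∀ x y : CMS A, x.1 0 = y.1 0 → x ≠ y →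
      |(Lop A φ f x - Lop A τ f x) - (Lop A φ f y - Lop A τ f y)| ≤
        δ * (2 * K0 * M) * h₀sup (x.1 0) * θ ^ sCount A a x y := by
    intro x y hxy hne
    have ht1 : 1 ≤ sepT A x y := sepT_pos hne hxy
    have hEy : HasSum
        (fun z : {z : S // A z (x.1 0)} => Et (consA z.1 y (hxy ▸ z.2))) (h₀ y) :=
      hasSum_cons' Et hxy (hEig y)
    have hs1 := hSumGen φ hφδ (fun z : {z : S // A z (x.1 0)} => consA z.1 x z.2) (hEig x)
    have hs2 := hSumGen τ hτδ (fun z : {z : S // A z (x.1 0)} => consA z.1 x z.2) (hEig x)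
    have hs3 := hSumGen φ hφδ (fun z : {z : S // A z (x.1 0)} => consA z.1 y (hxy ▸ z.2)) hEy
    have hs4 := hSumGen τ hτδ (fun z : {z : S // A z (x.1 0)} => consA z.1 y (hxy ▸ z.2)) hEy
    have hty : ∀ ρ : CMS A → ℝ,
        (∑' z : {z : S // A z (y.1 0)},
          Real.exp (ρ (consA z.1 y z.2)) * f (consA z.1 y z.2)) =
        ∑' z : {z : S // A z (x.1 0)},
          Real.exp (ρ (consA z.1 y (hxy ▸ z.2))) * f (consA z.1 y (hxy ▸ z.2)) :=
      fun ρ => tsum_cons' (fun w => Real.exp (ρ w) * f w) hxy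
    rw [hLopEq φ x, hLopEq τ x, hLopEq φ y, hLopEq τ y, hty φ, hty τ,
      ← Summable.tsum_sub hs1 hs2, ← Summable.tsum_sub hs3 hs4, ← Summable.tsum_sub (hs1.sub hs2) (hs3.sub hs4)]
    have hptw : ∀ z : {z : S // A z (x.1 0)},
        |(Real.exp (φ (consA z.1 x z.2)) * f (consA z.1 x z.2) -
            Real.exp (τ (consA z.1 x z.2)) * f (consA z.1 x z.2)) -
          (Real.exp (φ (consA z.1 y (hxy ▸ z.2))) * f (consA z.1 y (hxy ▸ z.2)) -
            Real.exp (τ (consA z.1 y (hxy ▸ z.2))) * f (consA z.1 y (hxy ▸ z.2)))| ≤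
        δ * θ ^ sCount A a x y * K0 * M *
          (Et (consA z.1 x z.2) + Et (consA z.1 y (hxy ▸ z.2))) := by
      intro z
      set wx : CMS A := consA z.1 x z.2 with hwx
      set wy : CMS A := consA z.1 y (hxy ▸ z.2) with hwy
      have hwne : wx ≠ wy := consA_ne _ _ hne
      have hsepw : sepT A wx wy = sepT A x y + 1 := sepT_consA _ _ hne
      have hscw : sCount A a x y ≤ sCount A a wx wy := sCount_le_consA a _ _ hne
      have hagree : ∀ i < sepT A x y + 1, wx.1 i = wy.1 i := by
        intro i hi
        cases i with
        | zero => rfl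
        | succ m =>
          show (consA z.1 x z.2).1 (m + 1) = (consA z.1 y (hxy ▸ z.2)).1 (m + 1)
          rw [consA_succ, consA_succ]
          exact sepT_agree (by omega)
      have hPP' : |φ wx - φ wy| ≤ C * θ ^ (sepT A x y + 1) :=
        hvar _ (by omega) wx wy hagree
      have hsem' : |(φ wx - τ wx) - (φ wy - τ wy)| ≤ δ * θ ^ (sepT A x y + 1) := by
        have h := hsem wx wy hwne
        rwa [hsepw] at h
      have hFF' : |f wx - f wy| ≤ h₀sup z.1 * θ ^ sCount A a x y := by
        calc |f wx - f wy| ≤ h₀sup (wx.1 0) * θ ^ sCount A a wx wy := hflip wx wy rfl hwne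
          _ ≤ h₀sup z.1 * θ ^ sCount A a x y :=
            mul_le_mul_of_nonneg_left
              (pow_le_pow_of_le_one hθ0.le hθ1.le hscw) (hsupp z.1).le
      have hF' : |f wy| ≤ h₀sup z.1 := hfs wy
      have hns : θ ^ (sepT A x y + 1) ≤ θ ^ sCount A a x y :=
        pow_le_pow_of_le_one hθ0.le hθ1.le
          (by have := sCount_le_sepT (A := A) a x y; omega)
      have hkey := key_lip hδ0.le hδ1 hθ0.le hθ1.le hC.le (hsupp z.1).le hns hK0e hK0c
        (hτδ wx) (hτδ wy) hPP' hsem' hFF' hF'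
      calc |(Real.exp (φ wx) * f wx - Real.exp (τ wx) * f wx) -
            (Real.exp (φ wy) * f wy - Real.exp (τ wy) * f wy)|
          = |(Real.exp (φ wx) - Real.exp (τ wx)) * f wx -
              (Real.exp (φ wy) - Real.exp (τ wy)) * f wy| := by rw [sub_mul, sub_mul]
        _ ≤ δ * θ ^ sCount A a x y * K0 *
              (Real.exp (φ wx) * h₀sup z.1 + Real.exp (φ wy) * h₀sup z.1) := hkey
        _ ≤ δ * θ ^ sCount A a x y * K0 * (M * Et wx + M * Et wy) := by
            exact mul_le_mul_of_nonneg_left (add_le_add (hEtphi wx) (hEtphi wy))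
              (mul_nonneg (mul_nonneg hδ0.le (pow_nonneg hθ0.le _)) hK00.le)
        _ = δ * θ ^ sCount A a x y * K0 * M * (Et wx + Et wy) := by ring
    refine le_trans (abs_tsum_le_of_le hptw
      ((((hEig x).add hEy).summable).mul_left (δ * θ ^ sCount A a x y * K0 * M))) ?_
    rw [(((hEig x).add hEy).mul_left (δ * θ ^ sCount A a x y * K0 * M)).tsum_eq]
    have hco : 0 ≤ δ * θ ^ sCount A a x y * K0 * M :=
      mul_nonneg (mul_nonneg (mul_nonneg hδ0.le (pow_nonneg hθ0.le _)) hK00.le) hM0.le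
    have hy' : h₀ y ≤ h₀sup (x.1 0) := by
      have h := hsuple y
      rwa [← hxy] at h
    calc δ * θ ^ sCount A a x y * K0 * M * (h₀ x + h₀ y)
        ≤ δ * θ ^ sCount A a x y * K0 * M * (h₀sup (x.1 0) + h₀sup (x.1 0)) :=
          mul_le_mul_of_nonneg_left (add_le_add (hsuple x) hy') hco
      _ = δ * (2 * K0 * M) * h₀sup (x.1 0) * θ ^ sCount A a x y := by ring
  -- ### assemble the 𝓑-norm bound
  simp only [Bnorm]
  apply iSup_le
  intro b
  apply ennreal_inv_mul_le_of_le (hsupp b) hε.le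
  have hS : (⨆ (x : CMS A) (_ : x.1 0 = b),
      ENNReal.ofReal |Lop A φ f x - Lop A τ f x|) ≤
      ENNReal.ofReal (δ * Real.exp 1 * M * h₀sup b) := by
    apply iSup_le; intro x; apply iSup_le; intro hx
    apply ENNReal.ofReal_le_ofReal
    have h := hDsup x
    rwa [hx] at h
  have hL : (⨆ (x : CMS A) (y : CMS A) (_ : x.1 0 = b) (_ : y.1 0 = b) (_ : x ≠ y),
      edist (Lop A φ f x - Lop A τ f x) (Lop A φ f y - Lop A τ f y) /
        ENNReal.ofReal (θ ^ sCount A a x y)) ≤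
      ENNReal.ofReal (δ * (2 * K0 * M) * h₀sup b) := by
    apply iSup_le; intro x; apply iSup_le; intro y
    apply iSup_le; intro hx; apply iSup_le; intro hy; apply iSup_le; intro hne
    apply ennreal_div_le ?_
      (mul_nonneg (mul_nonneg hδ0.le (by positivity)) (hsupp b).le)
    rw [edist_dist, Real.dist_eq]
    apply ENNReal.ofReal_le_ofReal
    have h := hDlip x y (hx.trans hy.symm) hne
    rwa [hx] at h
  refine le_trans (add_le_add hS hL) ?_
  rw [← ENNReal.ofReal_add
    (mul_nonneg (mul_nonneg (mul_nonneg hδ0.le (Real.exp_pos 1).le) hM0.le) (hsupp b).le)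
    (mul_nonneg (mul_nonneg hδ0.le (by positivity)) (hsupp b).le)]
  apply ENNReal.ofReal_le_ofReal
  have h1 : δ * (M * (Real.exp 1 + 2 * K0) + 1) * h₀sup b ≤ ε * h₀sup b := by
    rw [← hKdef]
    exact mul_le_mul_of_nonneg_right hδK (hsupp b).le
  nlinarith [mul_nonneg hδ0.le (hsupp b).le]
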